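/- Nearest Neighbor guarantees a 1/n fraction of the optimum: if d* is the distance from the origin to the nearest reward, then OPT ≤ n·γ^{d*}, and since NN collects at least γ^{d*}, we have NN/OPT ≥ 1/n. -/

import Mathlib

/-- Nearest Neighbor guarantees a `1/n` fraction of the optimum:
`NN` collects at least `γ ^ d*` where `d*` is the distance from the origin to the
nearest reward, and `OPT ≤ n · γ ^ d*`, hence `γ ^ d* / OPT ≥ 1/n`. -/
theorem nn_guarantee (n : ℕ) (hn : 1 ≤ n) (γ : ℝ) (hγ : γ ∈ Set.Ioo (0:ℝ) 1)
    (d : Fin (n+1) → Fin (n+1) → ℝ) (hd : ∀ i j, 0 ≤ d i j)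
    (dstar : ℝ)
    (hstar : IsLeast {r : ℝ | ∃ i : Fin (n+1), i ≠ 0 ∧ r = d 0 i} dstar)
    (OPT : ℝ)
    (hOPT : OPT = sSup {v : ℝ | ∃ o : ℕ → Fin (n+1), o 0 = 0 ∧
      Set.InjOn o (Set.Icc 0 n) ∧
      v = ∑ j ∈ Finset.range n,
            γ ^ (∑ t ∈ Finset.range (j+1), d (o t) (o (t+1)))}) :
    γ ^ dstar / OPT ≥ 1 / n := by
  obtain ⟨hγ0, hγ1⟩ := hγ
  set S := {v : ℝ | ∃ o : ℕ → Fin (n+1), o 0 = 0 ∧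
      Set.InjOn o (Set.Icc 0 n) ∧
      v = ∑ j ∈ Finset.range n,
            γ ^ (∑ t ∈ Finset.range (j+1), d (o t) (o (t+1)))} with hS
  -- every element of S is ≤ n * γ ^ dstar
  have hub : ∀ v ∈ S, v ≤ n * γ ^ dstar := by
    rintro v ⟨o, ho0, hinj, rfl⟩
    have ho1 : o 1 ≠ 0 := by
      intro h
      have : (1 : ℕ) = 0 := hinj (by simp [Set.mem_Icc]; omega) (by simp) (h.trans ho0.symm)
      omega
    have hd1 : dstar ≤ d (o 0) (o 1) := by
      rw [ho0]
      exact hstar.2 ⟨o 1, ho1, rfl⟩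
    have key : ∀ j ∈ Finset.range n,
        γ ^ (∑ t ∈ Finset.range (j+1), d (o t) (o (t+1))) ≤ γ ^ dstar := by
      intro j _
      apply Real.rpow_le_rpow_of_exponent_ge hγ0 hγ1.le
      calc dstar ≤ d (o 0) (o 1) := hd1
        _ ≤ ∑ t ∈ Finset.range (j+1), d (o t) (o (t+1)) := by
            apply Finset.single_le_sum (f := fun t => d (o t) (o (t+1)))
              (fun t _ => hd _ _) (by simp)
    calc ∑ j ∈ Finset.range n, γ ^ (∑ t ∈ Finset.range (j+1), d (o t) (o (t+1)))
        ≤ ∑ _j ∈ Finset.range n, γ ^ dstar := Finset.sum_le_sum key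
      _ = n * γ ^ dstar := by simp [mul_comm]
  have hbdd : BddAbove S := ⟨n * γ ^ dstar, hub⟩
  -- a concrete member of S with positive value
  set o₀ : ℕ → Fin (n+1) := fun t => ⟨t % (n+1), Nat.mod_lt _ (Nat.succ_pos n)⟩ with ho₀
  have hmem : (∑ j ∈ Finset.range n,
      γ ^ (∑ t ∈ Finset.range (j+1), d (o₀ t) (o₀ (t+1)))) ∈ S := by
    refine ⟨o₀, ?_, ?_, rfl⟩
    · simp [ho₀]
    · intro a ha b hb hab
      simp only [Set.mem_Icc] at ha hb
      have : a % (n+1) = b % (n+1) := congrArg Fin.val hab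
      rwa [Nat.mod_eq_of_lt (by omega), Nat.mod_eq_of_lt (by omega)] at this
  have hpos : 0 < (∑ j ∈ Finset.range n,
      γ ^ (∑ t ∈ Finset.range (j+1), d (o₀ t) (o₀ (t+1)))) := by
    apply Finset.sum_pos (fun j _ => Real.rpow_pos_of_pos hγ0 _)
    exact Finset.nonempty_range_iff.mpr (by omega)
  have hOPTpos : 0 < OPT := by
    rw [hOPT]
    exact lt_of_lt_of_le hpos (le_csSup hbdd hmem)
  have hOPTle : OPT ≤ n * γ ^ dstar := by
    rw [hOPT]
    exact csSup_le ⟨_, hmem⟩ hub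
  have hnpos : (0:ℝ) < n := by exact_mod_cast Nat.pos_of_ne_zero (by omega)
  rw [ge_iff_le, div_le_div_iff₀ hnpos hOPTpos]
  linarith
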